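/- arXiv:2504.16380 — 2 statements merged into one kernel-verified Lean document; each statement's English description precedes it below -/
import Mathlib

section
/- Let (X̃^n, Ỹ^n) have joint distribution P̃ on X^n × Y^n obtained by conditioning the i.i.d. distribution P_{XY}^n on an event C, and let J be uniform on {1,…,n} independent of everything else. Then D(P̃ ‖ P_{XY}^n) + H(X̃^n | Ỹ^n) ≥ n ( D(P_{X̃_J Ỹ_J} ‖ P_{XY}) + H(X̃_J | Ỹ_J) ), where P_{X̃_J Ỹ_J}(x,y) = (1/n) Σ_{j=1}^n P_{X̃_j Ỹ_j}(x,y). -/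
open Real Finset
open scoped Classical

noncomputable section

/-- Shannon entropy (base 2) of a pmf on a finite type. -/
def ent {S : Type*} [Fintype S] (p : S → ℝ) : ℝ :=
  - ∑ s, p s * Real.logb 2 (p s)

/-- Pushforward pmf under a map. -/
def push {S T : Type*} [Fintype S] [Fintype T] (p : S → ℝ) (f : S → T) : T → ℝ :=
  fun t => ∑ s, if f s = t then p s else 0

/-- Entropy of the random variable `f` under joint pmf `p`. -/
def entOf {S T : Type*} [Fintype S] [Fintype T] (p : S → ℝ) (f : S → T) : ℝ :=
  ent (push p f)

/-- Conditional entropy `H(f | g)` under joint pmf `p`. -/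
def condEnt {S T V : Type*} [Fintype S] [Fintype T] [Fintype V]
    (p : S → ℝ) (f : S → T) (g : S → V) : ℝ :=
  entOf p (fun s => (f s, g s)) - entOf p g

/-- Mutual information `I(f ∧ g)` under joint pmf `p`. -/
def miOf {S T V : Type*} [Fintype S] [Fintype T] [Fintype V]
    (p : S → ℝ) (f : S → T) (g : S → V) : ℝ :=
  entOf p f + entOf p g - entOf p (fun s => (f s, g s))

/-- Conditional mutual information `I(f ∧ g | h)` under joint pmf `p`. -/
def cmiOf {S T V W : Type*} [Fintype S] [Fintype T] [Fintype V] [Fintype W]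
    (p : S → ℝ) (f : S → T) (g : S → V) (h : S → W) : ℝ :=
  condEnt p f h + condEnt p g h - condEnt p (fun s => (f s, g s)) h

/-- Kullback–Leibler divergence (base 2). -/
def kl {S : Type*} [Fintype S] (p q : S → ℝ) : ℝ :=
  ∑ s, p s * Real.logb 2 (p s / q s)

end

section Helpers

lemma push_nonneg {S T : Type*} [Fintype S] [Fintype T] (p : S → ℝ) (hp : ∀ s, 0 ≤ p s)
    (g : S → T) (t : T) : 0 ≤ push p g t :=
  Finset.sum_nonneg fun s _ => by split <;> simp [hp s]

lemma push_mul_sum {S T : Type*} [Fintype S] [Fintype T] (p : S → ℝ) (g : S → T) (f : T → ℝ) :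
    ∑ t, push p g t * f t = ∑ s, p s * f (g s) := by
  unfold push
  simp_rw [Finset.sum_mul, ite_mul, zero_mul]
  rw [Finset.sum_comm]
  refine Finset.sum_congr rfl fun s _ => ?_
  simp [Finset.sum_ite_eq]

lemma sum_push {S T : Type*} [Fintype S] [Fintype T] (p : S → ℝ) (g : S → T) :
    ∑ t, push p g t = ∑ s, p s := by
  have := push_mul_sum p g (fun _ => 1)
  simpa using this

lemma push_comp {S T U : Type*} [Fintype S] [Fintype T] [Fintype U]
    (p : S → ℝ) (g : S → T) (h : T → U) (u : U) :
    push (push p g) h u = push p (fun s => h (g s)) u := by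
  unfold push
  have : ∀ t, (if h t = u then (∑ s, if g s = t then p s else 0) else 0)
      = (∑ s, if g s = t then p s else 0) * (if h t = u then (1:ℝ) else 0) := by
    intro t; split <;> simp
  simp_rw [this]
  have h2 := push_mul_sum p g (fun t => if h t = u then (1:ℝ) else 0)
  unfold push at h2
  rw [h2]
  refine Finset.sum_congr rfl fun s _ => ?_
  split <;> simp

lemma gibbs {S : Type*} [Fintype S] (p q : S → ℝ) (hp : ∀ s, 0 ≤ p s) (hq : ∀ s, 0 ≤ q s)
    (hacq : ∀ s, q s = 0 → p s = 0) (hle : ∑ s, q s ≤ ∑ s, p s) :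
    0 ≤ ∑ s, p s * Real.logb 2 (p s / q s) := by
  have key : ∀ s, p s - q s ≤ p s * Real.log (p s / q s) := by
    intro s
    rcases eq_or_lt_of_le (hp s) with h0 | hps
    · simp [← h0]; linarith [hq s]
    · have hqs : 0 < q s := by
        rcases eq_or_lt_of_le (hq s) with h0 | h
        · exact absurd (hacq s h0.symm) (by linarith)
        · exact h
      have h1 : Real.log (q s / p s) ≤ q s / p s - 1 :=
        Real.log_le_sub_one_of_pos (by positivity)
      have h2 : Real.log (q s / p s) = - Real.log (p s / q s) := by
        rw [← Real.log_inv]; congr 1; field_simp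
      rw [h2] at h1
      have := mul_le_mul_of_nonneg_left h1 (le_of_lt hps)
      have h3 : p s * (q s / p s - 1) = q s - p s := by field_simp
      nlinarith
  have hsum : 0 ≤ ∑ s, p s * Real.log (p s / q s) := by
    calc (0:ℝ) ≤ ∑ s, (p s - q s) := by rw [Finset.sum_sub_distrib]; linarith
    _ ≤ _ := Finset.sum_le_sum fun s _ => key s
  have : ∑ s, p s * Real.logb 2 (p s / q s) = (∑ s, p s * Real.log (p s / q s)) / Real.log 2 := by
    rw [Finset.sum_div]
    refine Finset.sum_congr rfl fun s _ => ?_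
    rw [Real.logb]; ring
  rw [this]
  positivity

lemma push_fst_marg {S X Y : Type*} [Fintype S] [Fintype X] [Fintype Y]
    (p : S → ℝ) (f : S → X) (g : S → Y) (y : Y) :
    ∑ x, push p (fun s => (f s, g s)) (x, y) = push p g y := by
  unfold push
  rw [Finset.sum_comm]
  refine Finset.sum_congr rfl fun s _ => ?_
  by_cases h : g s = y
  · simp [Prod.ext_iff, h, Finset.sum_ite_eq]
  · simp [Prod.ext_iff, h]

end Helpers

theorem stmt3 {X Y : Type*} [Fintype X] [Fintype Y] (n : ℕ) (hn : 0 < n)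
    (PXY : X × Y → ℝ) (hP : ∀ a, 0 ≤ PXY a) (hP1 : ∑ a, PXY a = 1)
    (Pt : (Fin n → X) × (Fin n → Y) → ℝ) (hp : ∀ s, 0 ≤ Pt s) (hp1 : ∑ s, Pt s = 1)
    (hac : ∀ s, (∏ j, PXY (s.1 j, s.2 j)) = 0 → Pt s = 0) :
    kl Pt (fun s => ∏ j, PXY (s.1 j, s.2 j))
        + condEnt Pt (fun s => s.1) (fun s => s.2)
      ≥ n * (kl (fun a : X × Y => (n : ℝ)⁻¹ * ∑ j, push Pt (fun s => (s.1 j, s.2 j)) a) PXY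
          + (ent (fun a : X × Y => (n : ℝ)⁻¹ * ∑ j, push Pt (fun s => (s.1 j, s.2 j)) a)
              - ent (fun y : Y => (n : ℝ)⁻¹ * ∑ j, ∑ x : X, push Pt (fun s => (s.1 j, s.2 j)) (x, y)))) := by
  have hnR : (n : ℝ) ≠ 0 := Nat.cast_ne_zero.mpr hn.ne'
  have hninv : (0:ℝ) < (n:ℝ)⁻¹ := by positivity
  -- abbreviations
  set Qn : (Fin n → X) × (Fin n → Y) → ℝ := fun s => ∏ j, PXY (s.1 j, s.2 j) with hQndef
  set Pj : Fin n → (X × Y → ℝ) := fun j => push Pt (fun s => (s.1 j, s.2 j)) with hPjdef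
  set Pbar : X × Y → ℝ := fun a => (n : ℝ)⁻¹ * ∑ j, Pj j a with hPbardef
  set mj : Fin n → (Y → ℝ) := fun j => push Pt (fun s => s.2 j) with hmjdef
  set pushY : (Fin n → Y) → ℝ := push Pt (fun s => s.2) with hpushYdef
  set ybar : Y → ℝ := fun y => (n : ℝ)⁻¹ * ∑ j, mj j y with hybardef
  -- goal's ybar equals ours
  have hybarG : (fun y : Y => (n : ℝ)⁻¹ * ∑ j, ∑ x : X, Pj j (x, y)) = ybar := by
    funext y
    rw [hybardef]
    congr 1
    refine Finset.sum_congr rfl fun j _ => ?_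
    rw [hPjdef, hmjdef]
    exact push_fst_marg Pt (fun s => s.1 j) (fun s => s.2 j) y
  -- basic facts
  have hPjnn : ∀ j a, 0 ≤ Pj j a := fun j a => push_nonneg Pt hp _ a
  have hPj1 : ∀ j, ∑ a, Pj j a = 1 := fun j => by rw [hPjdef]; rw [sum_push]; exact hp1
  have hmjnn : ∀ j y, 0 ≤ mj j y := fun j y => push_nonneg Pt hp _ y
  have hmj1 : ∀ j, ∑ y, mj j y = 1 := fun j => by rw [hmjdef]; rw [sum_push]; exact hp1
  have hpushYnn : ∀ t, 0 ≤ pushY t := fun t => push_nonneg Pt hp _ t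
  have hpushY1 : ∑ t, pushY t = 1 := by rw [hpushYdef, sum_push]; exact hp1
  -- absolute continuity of single-letter marginals
  have hQac : ∀ a, PXY a = 0 → ∀ j, Pj j a = 0 := by
    intro a ha j
    rw [hPjdef]
    refine Finset.sum_eq_zero fun s _ => ?_
    by_cases h : (s.1 j, s.2 j) = a
    · simp only [h, if_true]
      exact hac s (Finset.prod_eq_zero (Finset.mem_univ j) (by rw [h]; exact ha))
    · simp [h]
  -- LHS step 1 : split the kl term
  have hkl1 : kl Pt Qn = (∑ s, Pt s * Real.logb 2 (Pt s)) - ∑ s, Pt s * Real.logb 2 (Qn s) := by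
    unfold kl
    rw [← Finset.sum_sub_distrib]
    refine Finset.sum_congr rfl fun s _ => ?_
    by_cases h : Pt s = 0
    · simp [h]
    · have hq : Qn s ≠ 0 := fun h0 => h (hac s h0)
      rw [Real.logb_div h hq]; ring
  -- LHS step 2 : single-letterization of the cross term
  have hkl2 : ∑ s, Pt s * Real.logb 2 (Qn s) = ∑ j, ∑ a, Pj j a * Real.logb 2 (PXY a) := by
    have step : ∀ s, Pt s * Real.logb 2 (Qn s)
        = ∑ j, Pt s * Real.logb 2 (PXY (s.1 j, s.2 j)) := by
      intro s
      by_cases h : Pt s = 0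
      · simp [h]
      · have hq : Qn s ≠ 0 := fun h0 => h (hac s h0)
        have hfac : ∀ j ∈ Finset.univ, PXY (s.1 j, s.2 j) ≠ 0 := fun j _ h0 =>
          hq (Finset.prod_eq_zero (Finset.mem_univ j) h0)
        rw [hQndef]
        rw [Real.logb_prod _ _ hfac, Finset.mul_sum]
    simp_rw [step]
    rw [Finset.sum_comm]
    refine Finset.sum_congr rfl fun j _ => ?_
    rw [hPjdef]
    exact (push_mul_sum Pt (fun s => (s.1 j, s.2 j)) (fun a => Real.logb 2 (PXY a))).symm
  -- LHS step 3 : the conditional entropy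
  have hce : condEnt Pt (fun s => s.1) (fun s => s.2)
      = -(∑ s, Pt s * Real.logb 2 (Pt s)) - ent pushY := by
    unfold condEnt entOf
    have hid : push Pt (fun s => (s.1, s.2)) = Pt := by
      funext t
      unfold push
      simp [Finset.sum_ite_eq']
    rw [hid, hpushYdef]
    unfold ent
    ring
  -- RHS step : kl Pbar PXY + ent Pbar
  have hPbar_ne : ∀ a, Pbar a ≠ 0 → PXY a ≠ 0 := by
    intro a hPa hQ
    apply hPa
    have h0 : ∀ j ∈ Finset.univ, Pj j a = 0 := fun j _ => hQac a hQ j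
    show (n : ℝ)⁻¹ * ∑ j, Pj j a = 0
    rw [Finset.sum_congr rfl h0]
    simp
  have hrkl : kl Pbar PXY + ent Pbar = - ∑ a, Pbar a * Real.logb 2 (PXY a) := by
    unfold kl ent
    have : ∀ a, Pbar a * Real.logb 2 (Pbar a / PXY a)
        = Pbar a * Real.logb 2 (Pbar a) - Pbar a * Real.logb 2 (PXY a) := by
      intro a
      by_cases h : Pbar a = 0
      · simp [h]
      · rw [Real.logb_div h (hPbar_ne a h)]; ring
    simp_rw [this]
    rw [Finset.sum_sub_distrib]
    ring
  have hT : (n:ℝ) * ∑ a, Pbar a * Real.logb 2 (PXY a)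
      = ∑ j, ∑ a, Pj j a * Real.logb 2 (PXY a) := by
    rw [Finset.mul_sum]
    rw [Finset.sum_comm]
    refine Finset.sum_congr rfl fun a _ => ?_
    show (n:ℝ) * (((n : ℝ)⁻¹ * ∑ j, Pj j a) * Real.logb 2 (PXY a))
        = ∑ j, Pj j a * Real.logb 2 (PXY a)
    rw [← Finset.sum_mul, ← mul_assoc, ← mul_assoc, mul_inv_cancel₀ hnR, one_mul]
  -- Entropy inequality A : subadditivity
  have hdom : ∀ (t : Fin n → Y) (j : Fin n), pushY t ≤ mj j (t j) := by
    intro t j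
    rw [hpushYdef, hmjdef]
    unfold push
    refine Finset.sum_le_sum fun s _ => ?_
    by_cases h : s.2 = t
    · simp [h]
    · simp only [h, if_false]
      split <;> simp [hp s]
  have hMpos : ∀ t, pushY t ≠ 0 → ∀ j, mj j (t j) ≠ 0 := by
    intro t ht j
    have h1 : 0 < pushY t := lt_of_le_of_ne (hpushYnn t) (Ne.symm ht)
    exact ne_of_gt (lt_of_lt_of_le h1 (hdom t j))
  have hA : ent pushY ≤ ∑ j, ent (mj j) := by
    have hM1 : ∑ t : Fin n → Y, ∏ j, mj j (t j) = 1 := by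
      have h := Finset.prod_univ_sum (fun _ : Fin n => (Finset.univ : Finset Y))
        (fun j y => mj j y)
      rw [Fintype.piFinset_univ] at h
      rw [← h]
      rw [Finset.prod_congr rfl (fun j _ => hmj1 j)]
      simp
    have hg := gibbs pushY (fun t => ∏ j, mj j (t j)) hpushYnn
      (fun t => Finset.prod_nonneg fun j _ => hmjnn j (t j))
      (by
        intro t hM
        by_contra h
        exact (Finset.prod_ne_zero_iff.mpr fun j _ => hMpos t h j) hM)
      (by rw [hM1, hpushY1])
    have hsplit : ∑ t, pushY t * Real.logb 2 (pushY t / ∏ j, mj j (t j))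
        = (∑ t, pushY t * Real.logb 2 (pushY t))
          - ∑ t, pushY t * Real.logb 2 (∏ j, mj j (t j)) := by
      rw [← Finset.sum_sub_distrib]
      refine Finset.sum_congr rfl fun t _ => ?_
      by_cases h : pushY t = 0
      · simp [h]
      · rw [Real.logb_div h (Finset.prod_ne_zero_iff.mpr fun j _ => hMpos t h j)]; ring
    have hcross : ∑ t, pushY t * Real.logb 2 (∏ j, mj j (t j))
        = ∑ j, ∑ y, mj j y * Real.logb 2 (mj j y) := by
      have step : ∀ t, pushY t * Real.logb 2 (∏ j, mj j (t j))
          = ∑ j, pushY t * Real.logb 2 (mj j (t j)) := by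
        intro t
        by_cases h : pushY t = 0
        · simp [h]
        · rw [Real.logb_prod _ _ (fun j _ => hMpos t h j), Finset.mul_sum]
      simp_rw [step]
      rw [Finset.sum_comm]
      refine Finset.sum_congr rfl fun j _ => ?_
      have h1 := push_mul_sum pushY (fun t => t j) (fun y => Real.logb 2 (mj j y))
      rw [← h1]
      refine Finset.sum_congr rfl fun y _ => ?_
      have h2 : push pushY (fun t => t j) y = mj j y := by
        rw [hpushYdef, hmjdef]
        exact push_comp Pt (fun s => s.2) (fun t => t j) y
      rw [h2]
    rw [hsplit, hcross] at hg
    unfold ent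
    have : ∑ j, -∑ y, mj j y * Real.logb 2 (mj j y)
        = - ∑ j, ∑ y, mj j y * Real.logb 2 (mj j y) := by
      rw [← Finset.sum_neg_distrib]
    rw [this]
    linarith
  -- Entropy inequality B : concavity
  have hybar_nn : ∀ y, 0 ≤ ybar y := by
    intro y
    rw [hybardef]
    have : 0 ≤ ∑ j, mj j y := Finset.sum_nonneg fun j _ => hmjnn j y
    positivity
  have hybar1 : ∑ y, ybar y = 1 := by
    rw [hybardef]
    rw [← Finset.mul_sum, Finset.sum_comm]
    rw [Finset.sum_congr rfl (fun j (_ : j ∈ Finset.univ) => hmj1 j)]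
    simp [hnR]
  have hybar_ac : ∀ j y, ybar y = 0 → mj j y = 0 := by
    intro j y hy
    have hy2 : (n : ℝ)⁻¹ * ∑ k, mj k y = 0 := hy
    have h2 : ∑ k, mj k y = 0 := by
      rcases mul_eq_zero.mp hy2 with h | h
      · exact absurd h (by positivity)
      · exact h
    exact (Finset.sum_eq_zero_iff_of_nonneg (fun k _ => hmjnn k y)).mp h2 j (Finset.mem_univ j)
  have hB : ∑ j, ent (mj j) ≤ (n:ℝ) * ent ybar := by
    have hone : ∀ j : Fin n, 0 ≤ ∑ y, mj j y * Real.logb 2 (mj j y / ybar y) := fun j =>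
      gibbs (mj j) ybar (hmjnn j) hybar_nn (hybar_ac j) (by rw [hybar1, hmj1 j])
    have hsplit : ∀ j : Fin n, ∑ y, mj j y * Real.logb 2 (mj j y / ybar y)
        = (∑ y, mj j y * Real.logb 2 (mj j y)) - ∑ y, mj j y * Real.logb 2 (ybar y) := by
      intro j
      rw [← Finset.sum_sub_distrib]
      refine Finset.sum_congr rfl fun y _ => ?_
      by_cases h : mj j y = 0
      · simp [h]
      · have hyb : ybar y ≠ 0 := fun h0 => h (hybar_ac j y h0)
        rw [Real.logb_div h hyb]; ring
    have hsum : ∑ j, ∑ y, mj j y * Real.logb 2 (ybar y)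
        = (n:ℝ) * ∑ y, ybar y * Real.logb 2 (ybar y) := by
      rw [Finset.sum_comm, Finset.mul_sum]
      refine Finset.sum_congr rfl fun y _ => ?_
      rw [← Finset.sum_mul]
      have hnb : (∑ j, mj j y) = (n:ℝ) * ybar y := by
        show _ = (n:ℝ) * ((n : ℝ)⁻¹ * ∑ j, mj j y)
        rw [← mul_assoc, mul_inv_cancel₀ hnR, one_mul]
      rw [hnb]
      ring
    have htot : 0 ≤ ∑ j, ((∑ y, mj j y * Real.logb 2 (mj j y))
        - ∑ y, mj j y * Real.logb 2 (ybar y)) :=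
      Finset.sum_nonneg fun j _ => by rw [← hsplit j]; exact hone j
    rw [Finset.sum_sub_distrib, hsum] at htot
    unfold ent
    have : ∑ j, -∑ y, mj j y * Real.logb 2 (mj j y)
        = - ∑ j, ∑ y, mj j y * Real.logb 2 (mj j y) := by
      rw [← Finset.sum_neg_distrib]
    rw [this]
    linarith
  -- combine everything
  rw [hybarG, ge_iff_le, mul_add]
  have hfin : (n:ℝ) * (kl Pbar PXY + ent Pbar)
      = - ∑ j, ∑ a, Pj j a * Real.logb 2 (PXY a) := by
    rw [hrkl, ← hT]; ring
  rw [mul_sub]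
  have hAB : ent pushY ≤ (n:ℝ) * ent ybar := le_trans hA hB
  linarith [hkl1, hkl2, hce, hfin, hAB]
end

section
/- (Exponential matching lemma) Let P and Q be probability distributions on a finite set C, and let (Z_c)_{c∈C} be i.i.d. Exp(1) random variables. Define Č_P := argmin_{c: P(c)>0} Z_c / P(c) and Č_Q := argmin_{c: Q(c)>0} Z_c / Q(c). Then Č_P is distributed according to P, and for every c with P(c) > 0 and Q(c) > 0, ℙ( Č_P ≠ Č_Q | Č_P = c ) ≤ 1 − ( 1 + P(c)/Q(c) )^{-1}. -/
open Real Finset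
open scoped Classical

open MeasureTheory ProbabilityTheory

namespace Stmt6Aux

open Set Real Finset
open scoped ENNReal

lemma expMeasure_def (r : ℝ) : expMeasure r = volume.withDensity (exponentialPDF r) := rfl

lemma expMeasure_Iic (x : ℝ) :
    expMeasure 1 (Set.Iic x) = ENNReal.ofReal (if 0 ≤ x then 1 - rexp (-x) else 0) := by
  rw [expMeasure_def, withDensity_apply _ measurableSet_Iic,
    lintegral_exponentialPDF_eq_antiDeriv one_pos x]
  simp

lemma expMeasure_Ioi {u : ℝ} (hu : 0 ≤ u) :
    expMeasure 1 (Set.Ioi u) = ENNReal.ofReal (rexp (-u)) := by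
  haveI : IsProbabilityMeasure (expMeasure 1) := isProbabilityMeasure_expMeasure one_pos
  have h : Set.Ioi u = (Set.Iic u)ᶜ := compl_Iic.symm
  rw [h, measure_compl measurableSet_Iic (measure_ne_top _ _), measure_univ, expMeasure_Iic,
    if_pos hu]
  rw [← ENNReal.ofReal_one, ← ENNReal.ofReal_sub _
    (by nlinarith [Real.exp_le_one_iff.2 (neg_nonpos.2 hu), Real.exp_pos (-u)])]
  norm_num

lemma key {C : Type*} [Fintype C] (c : C) (a : C → ℝ) (ha : ∀ c', 0 ≤ a c') :
    (Measure.pi fun _ : C => expMeasure 1) {ω : C → ℝ | ∀ c', c' ≠ c → a c' * ω c < ω c'}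
      = ENNReal.ofReal (1 + ∑ c' ∈ Finset.univ.erase c, a c')⁻¹ := by
  haveI : IsProbabilityMeasure (expMeasure 1) := isProbabilityMeasure_expMeasure one_pos
  set r : ℝ := 1 + ∑ c' ∈ Finset.univ.erase c, a c' with hr_def
  have hS0 : (0:ℝ) ≤ ∑ c' ∈ Finset.univ.erase c, a c' :=
    Finset.sum_nonneg fun i _ => ha i
  have hr : 0 < r := by positivity
  -- unique instance on {i // i = c}
  haveI hU : Unique {i : C // i = c} :=
    ⟨⟨⟨c, rfl⟩⟩, fun x => Subtype.ext x.2⟩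
  have hsum : ∑ j : {i : C // ¬ i = c}, a ↑j = ∑ c' ∈ Finset.univ.erase c, a c' :=
    (Finset.sum_subtype (Finset.univ.erase c) (fun x => by simp [Finset.mem_erase]) a).symm
  set e := MeasurableEquiv.piEquivPiSubtypeProd (fun _ : C => ℝ) (fun i => i = c) with he
  set S : Set (({i : C // i = c} → ℝ) × ({i : C // ¬ i = c} → ℝ)) :=
    {y | ∀ j : {i : C // ¬ i = c}, a ↑j * y.1 default < y.2 j} with hSdef
  have hSmeas : MeasurableSet S := by
    have : S = ⋂ j : {i : C // ¬ i = c}, {y : ({i : C // i = c} → ℝ) × ({i : C // ¬ i = c} → ℝ) |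
        a ↑j * y.1 default < y.2 j} := by
      ext y; simp [hSdef]
    rw [this]
    refine MeasurableSet.iInter fun j => measurableSet_lt ?_ ?_
    · exact (measurable_pi_apply _).comp measurable_fst |>.const_mul _
    · exact (measurable_pi_apply _).comp measurable_snd
  have hpre : {ω : C → ℝ | ∀ c', c' ≠ c → a c' * ω c < ω c'} = e ⁻¹' S := by
    ext ω
    simp only [Set.mem_preimage, hSdef, Set.mem_setOf_eq, he,
      MeasurableEquiv.piEquivPiSubtypeProd, MeasurableEquiv.coe_mk,
      Equiv.piEquivPiSubtypeProd_apply]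
    simp only [show ((default : {i : C // i = c}) : C) = c from (default : {i : C // i = c}).2]
    constructor
    · intro h j; exact h j j.2
    · intro h c' hc'; exact h ⟨c', hc'⟩
  have hmp := measurePreserving_piEquivPiSubtypeProd
      (fun _ : C => expMeasure 1) (fun i => i = c)
  rw [hpre, hmp.measure_preimage hSmeas.nullMeasurableSet]
  set f : ℝ → ℝ≥0∞ := fun t => ∏ j : {i : C // ¬ i = c}, expMeasure 1 (Set.Ioi (a ↑j * t))
    with hfdef
  have hf_meas : Measurable f := by
    refine Finset.measurable_prod _ fun j _ => ?_
    have h1 : Antitone fun u : ℝ => expMeasure 1 (Set.Ioi u) :=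
      fun u v huv => measure_mono (Set.Ioi_subset_Ioi huv)
    exact h1.measurable.comp (measurable_const_mul _)
  rw [Measure.prod_apply hSmeas]
  have hinner : ∀ x : {i : C // i = c} → ℝ,
      (Measure.pi fun _ : {i : C // ¬ i = c} => expMeasure 1) (Prod.mk x ⁻¹' S)
        = f (x default) := by
    intro x
    have : Prod.mk x ⁻¹' S = Set.univ.pi fun j : {i : C // ¬ i = c} =>
        Set.Ioi (a ↑j * x default) := by
      ext g; simp [hSdef, Set.mem_pi]
    rw [this, Measure.pi_pi]
  simp_rw [hinner]
  trans (∫⁻ t, f t ∂(expMeasure 1))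
  · have h2 := (measurePreserving_funUnique (expMeasure 1) {i : C // i = c}).lintegral_comp
      hf_meas
    convert h2 using 2 <;> first | rfl | congr!
  have hm1 : Measurable (exponentialPDF 1) := (measurable_exponentialPDFReal 1).ennreal_ofReal
  have hmr : Measurable (exponentialPDF r) := (measurable_exponentialPDFReal r).ennreal_ofReal
  rw [expMeasure_def, lintegral_withDensity_eq_lintegral_mul _ hm1 hf_meas]
  have hpoint : ∀ t : ℝ, (exponentialPDF 1 * f) t = (ENNReal.ofReal r)⁻¹ * exponentialPDF r t := by
    intro t
    rcases lt_or_ge t 0 with ht | ht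
    · simp [exponentialPDF_of_neg ht]
    · have hprod : f t = ENNReal.ofReal (rexp (-((∑ c' ∈ Finset.univ.erase c, a c') * t))) := by
        rw [hfdef]
        simp only []
        have : ∀ j : {i : C // ¬ i = c}, expMeasure 1 (Set.Ioi (a ↑j * t))
            = ENNReal.ofReal (rexp (-(a ↑j * t))) := fun j =>
          expMeasure_Ioi (mul_nonneg (ha _) ht)
        rw [Finset.prod_congr rfl (fun j _ => this j), ← ENNReal.ofReal_prod_of_nonneg
          (fun j _ => (Real.exp_pos _).le), ← Real.exp_sum]
        congr 1
        rw [← Finset.sum_subtype (Finset.univ.erase c) (fun x => by simp [Finset.mem_erase])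
            (fun i => -(a i * t)),
          Finset.sum_neg_distrib, Finset.sum_mul]
      have h1 : (exponentialPDF 1 * f) t
          = ENNReal.ofReal (rexp (-(r * t))) := by
        rw [Pi.mul_apply, exponentialPDF_of_nonneg ht, hprod, ← ENNReal.ofReal_mul
          (by positivity)]
        rw [one_mul, ← Real.exp_add]
        congr 2
        rw [hr_def]; ring
      rw [h1, exponentialPDF_of_nonneg ht, ENNReal.ofReal_mul hr.le,
        ← mul_assoc, ENNReal.inv_mul_cancel (by simp [hr]) ENNReal.ofReal_ne_top, one_mul]
  rw [lintegral_congr hpoint, lintegral_const_mul _ hmr, lintegral_exponentialPDF_eq_one hr,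
    mul_one, ← ENNReal.ofReal_inv_of_pos hr]


lemma ae_pos {C : Type*} [Fintype C] :
    ∀ᵐ ω ∂(Measure.pi fun _ : C => expMeasure 1), ∀ c, 0 < ω c := by
  haveI : IsProbabilityMeasure (expMeasure 1) := isProbabilityMeasure_expMeasure one_pos
  rw [MeasureTheory.ae_all_iff]
  intro c
  rw [MeasureTheory.ae_iff]
  have hset : {ω : C → ℝ | ¬ 0 < ω c} = Set.univ.pi
      (fun i => if i = c then Set.Iic 0 else Set.univ) := by
    ext ω
    simp only [Set.mem_setOf_eq, Set.mem_pi, Set.mem_univ, true_implies, not_lt]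
    constructor
    · intro h i
      split_ifs with hi
      · subst hi; simpa using h
      · exact Set.mem_univ _
    · intro h
      have := h c
      simpa using this
  rw [hset, Measure.pi_pi]
  refine Finset.prod_eq_zero (Finset.mem_univ c) ?_
  rw [if_pos rfl, expMeasure_Iic]
  norm_num

lemma aux_iff {p pc x y : ℝ} (hpc : 0 < pc) (hp : 0 ≤ p) (hx : 0 < x) (hy : 0 < y) :
    (0 < p → x / pc < y / p) ↔ p / pc * x < y := by
  rcases hp.lt_or_eq with hp' | hp'
  · constructor
    · intro h
      have h2 := h hp'
      rw [div_lt_div_iff₀ hpc hp'] at h2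
      rw [div_mul_eq_mul_div, div_lt_iff₀ hpc]
      nlinarith
    · intro h hp2
      rw [div_mul_eq_mul_div, div_lt_iff₀ hpc] at h
      rw [div_lt_div_iff₀ hpc hp']
      nlinarith
  · constructor
    · intro _
      rw [← hp']
      simpa using hy
    · intro _ hp2
      rw [← hp'] at hp2
      exact absurd hp2 (lt_irrefl 0)

lemma argmin_iff {C : Type*} (P : C → ℝ) (ω : C → ℝ) (d c : C) (hc : 0 < P c)
    (h1 : 0 < P d) (h2 : ∀ c', 0 < P c' → c' ≠ d → ω d / P d < ω c' / P c') :
    d = c ↔ ∀ c', c' ≠ c → 0 < P c' → ω c / P c < ω c' / P c' := by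
  constructor
  · rintro rfl c' hne hp
    exact h2 c' hp hne
  · intro h
    by_contra hne
    have ha := h2 c hc (fun e => hne e.symm)
    have hb := h d hne h1
    linarith

end Stmt6Aux

theorem stmt6 {C : Type*} [Fintype C] [Nonempty C]
    (P Q : C → ℝ)
    (hPnn : ∀ c, 0 ≤ P c) (hP1 : ∑ c, P c = 1)
    (hQnn : ∀ c, 0 ≤ Q c) (hQ1 : ∑ c, Q c = 1)
    (CP CQ : (C → ℝ) → C)
    (hmP : ∀ c, MeasurableSet {ω : C → ℝ | CP ω = c})
    (hmQ : ∀ c, MeasurableSet {ω : C → ℝ | CQ ω = c})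
    (hCP : ∀ᵐ ω ∂(Measure.pi fun _ : C => expMeasure 1),
        0 < P (CP ω) ∧ ∀ c, 0 < P c → c ≠ CP ω → ω (CP ω) / P (CP ω) < ω c / P c)
    (hCQ : ∀ᵐ ω ∂(Measure.pi fun _ : C => expMeasure 1),
        0 < Q (CQ ω) ∧ ∀ c, 0 < Q c → c ≠ CQ ω → ω (CQ ω) / Q (CQ ω) < ω c / Q c) :
    (∀ c, (Measure.pi fun _ : C => expMeasure 1) {ω | CP ω = c} = ENNReal.ofReal (P c))
    ∧ ∀ c, 0 < P c → 0 < Q c →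
        ProbabilityTheory.cond (Measure.pi fun _ : C => expMeasure 1)
            {ω | CP ω = c} {ω | CP ω ≠ CQ ω}
          ≤ ENNReal.ofReal (1 - (1 + P c / Q c)⁻¹) := by
  haveI : IsProbabilityMeasure (expMeasure 1) := isProbabilityMeasure_expMeasure one_pos
  set μ := Measure.pi fun _ : C => expMeasure 1 with hmu
  have herase : ∀ (c : C) (R : C → ℝ), (∑ c', R c') = 1 →
      ∑ c' ∈ Finset.univ.erase c, R c' = 1 - R c := by
    intro c R hR
    have h := Finset.sum_erase_add Finset.univ R (Finset.mem_univ c)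
    rw [hR] at h
    linarith
  have part1 : ∀ c, μ {ω | CP ω = c} = ENNReal.ofReal (P c) := by
    intro c
    by_cases hc : 0 < P c
    · have hEq : {ω : C → ℝ | CP ω = c}
          =ᵐ[μ] {ω : C → ℝ | ∀ c', c' ≠ c → (P c' / P c) * ω c < ω c'} := by
        refine Filter.eventuallyEq_set.2 ?_
        filter_upwards [hCP, Stmt6Aux.ae_pos] with ω hP hpos
        rw [Stmt6Aux.argmin_iff P ω (CP ω) c hc hP.1 hP.2]
        constructor
        · intro h c' hne
          exact (Stmt6Aux.aux_iff hc (hPnn c') (hpos c) (hpos c')).1 (h c' hne)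
        · intro h c' hne hp
          exact (Stmt6Aux.aux_iff hc (hPnn c') (hpos c) (hpos c')).2 (h c' hne) hp
      rw [measure_congr hEq,
        Stmt6Aux.key c (fun c' => P c' / P c) (fun c' => div_nonneg (hPnn c') hc.le)]
      congr 1
      rw [← Finset.sum_div, herase c P hP1]
      rw [show (1 : ℝ) + (1 - P c) / P c = (P c)⁻¹ by field_simp; ring, inv_inv]
    · have hc0 : P c = 0 := le_antisymm (not_lt.1 hc) (hPnn c)
      rw [hc0, ENNReal.ofReal_zero]
      refine measure_eq_zero_iff_ae_notMem.2 ?_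
      filter_upwards [hCP] with ω h hm
      rw [hm, hc0] at h
      exact lt_irrefl 0 h.1
  refine ⟨part1, ?_⟩
  intro c hc hq
  set p := P c with hp_def
  set q := Q c with hq_def
  set s := {ω : C → ℝ | CP ω = c} with hs_def
  set a : C → ℝ := fun c' => max (P c' / p) (Q c' / q) with ha_def
  have hann : ∀ c', 0 ≤ a c' := fun c' => le_max_of_le_left (div_nonneg (hPnn c') hc.le)
  have hEq2 : ((s ∩ {ω : C → ℝ | CQ ω = c} : Set (C → ℝ))) =ᵐ[μ]
      ({ω : C → ℝ | ∀ c', c' ≠ c → a c' * ω c < ω c'} : Set (C → ℝ)) := by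
    refine Filter.eventuallyEq_set.2 ?_
    filter_upwards [hCP, hCQ, Stmt6Aux.ae_pos] with ω hP hQ hpos
    show (CP ω = c ∧ CQ ω = c) ↔ (∀ c', c' ≠ c → a c' * ω c < ω c')
    rw [Stmt6Aux.argmin_iff P ω (CP ω) c hc hP.1 hP.2,
      Stmt6Aux.argmin_iff Q ω (CQ ω) c hq hQ.1 hQ.2]
    constructor
    · rintro ⟨h1, h2⟩ c' hne
      have e1 := (Stmt6Aux.aux_iff hc (hPnn c') (hpos c) (hpos c')).1 (fun hp => h1 c' hne hp)
      have e2 := (Stmt6Aux.aux_iff hq (hQnn c') (hpos c) (hpos c')).1 (fun hp => h2 c' hne hp)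
      rw [ha_def]
      dsimp only
      rw [max_mul_of_nonneg _ _ (hpos c).le]
      exact max_lt e1 e2
    · intro h
      constructor
      · intro c' hne hp
        have h3 := h c' hne
        rw [ha_def] at h3
        dsimp only at h3
        rw [max_mul_of_nonneg _ _ (hpos c).le] at h3
        exact (Stmt6Aux.aux_iff hc (hPnn c') (hpos c) (hpos c')).2
          (lt_of_le_of_lt (le_max_left _ _) h3) hp
      · intro c' hne hp
        have h3 := h c' hne
        rw [ha_def] at h3
        dsimp only at h3
        rw [max_mul_of_nonneg _ _ (hpos c).le] at h3
        exact (Stmt6Aux.aux_iff hq (hQnn c') (hpos c) (hpos c')).2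
          (lt_of_le_of_lt (le_max_right _ _) h3) hp
  have hmeas_s : MeasurableSet s := hmP c
  set M := ∑ c' ∈ Finset.univ.erase c, a c' with hM_def
  have hval2 : μ (s ∩ {ω : C → ℝ | CQ ω = c}) = ENNReal.ofReal (1 + M)⁻¹ := by
    rw [measure_congr hEq2, Stmt6Aux.key c a hann]
  have hM0 : (0:ℝ) ≤ M := Finset.sum_nonneg fun i _ => hann i
  have h1M : (0:ℝ) < 1 + M := by linarith
  have hMle : M ≤ (1 - p)/p + (1 - q)/q := by
    rw [hM_def]
    calc ∑ c' ∈ Finset.univ.erase c, a c'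
        ≤ ∑ c' ∈ Finset.univ.erase c, (P c'/p + Q c'/q) :=
          Finset.sum_le_sum fun i _ => max_le_add_of_nonneg
            (div_nonneg (hPnn i) hc.le) (div_nonneg (hQnn i) hq.le)
      _ = (1 - p)/p + (1 - q)/q := by
          rw [Finset.sum_add_distrib, ← Finset.sum_div, ← Finset.sum_div,
            herase c P hP1, herase c Q hQ1]
  have hst : s ∩ {ω : C → ℝ | CP ω ≠ CQ ω} = s \ (s ∩ {ω : C → ℝ | CQ ω = c}) := by
    ext ω
    simp only [Set.mem_inter_iff, Set.mem_diff, Set.mem_setOf_eq, hs_def, not_and]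
    constructor
    · rintro ⟨h1, h2⟩
      exact ⟨h1, fun _ h3 => h2 (h1.trans h3.symm)⟩
    · rintro ⟨h1, h2⟩
      refine ⟨h1, fun h3 => h2 h1 ?_⟩
      rw [← h3]
      exact h1
  have hdiff : μ (s \ (s ∩ {ω : C → ℝ | CQ ω = c}))
      = μ s - μ (s ∩ {ω : C → ℝ | CQ ω = c}) :=
    measure_diff Set.inter_subset_left
      ((hmeas_s.inter (hmQ c)).nullMeasurableSet) (measure_ne_top μ _)
  rw [ProbabilityTheory.cond_apply hmeas_s μ, hst, hdiff, hval2, part1 c]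
  rw [← ENNReal.ofReal_sub _ (by positivity : (0:ℝ) ≤ (1+M)⁻¹)]
  have hmul : (ENNReal.ofReal p)⁻¹ * ENNReal.ofReal (p - (1+M)⁻¹)
      = ENNReal.ofReal ((p - (1+M)⁻¹) / p) := by
    rw [ENNReal.ofReal_div_of_pos hc, div_eq_mul_inv]
    ring
  rw [hmul]
  refine ENNReal.ofReal_le_ofReal ?_
  have hpq : (0:ℝ) < p + q := by linarith
  have key2 : p * q ≤ (1+M)⁻¹ * (p + q) := by
    have h2 : (1 + M) * (p*q) ≤ p + q := by
      have h3 := mul_le_mul_of_nonneg_right hMle (by positivity : (0:ℝ) ≤ p*q)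
      have h4 : ((1-p)/p + (1-q)/q) * (p*q) = (1-p)*q + (1-q)*p := by
        field_simp
      nlinarith [mul_pos hc hq]
    calc p*q = ((1+M) * (p*q)) * (1+M)⁻¹ := by
          rw [mul_comm (1+M) (p*q), mul_assoc, mul_inv_cancel₀ h1M.ne', mul_one]
      _ ≤ (p+q) * (1+M)⁻¹ := mul_le_mul_of_nonneg_right h2 (by positivity)
      _ = (1+M)⁻¹ * (p+q) := mul_comm _ _
  have hRHS : 1 - (1 + p/q)⁻¹ = p/(p+q) := by
    have h1 : 1 + p/q = (p+q)/q := by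
      field_simp
      ring
    rw [h1, inv_div, eq_div_iff hpq.ne', sub_mul, one_mul, div_mul_cancel₀ _ hpq.ne']
    ring
  rw [hRHS, div_le_div_iff₀ hc hpq]
  nlinarith [key2]
end
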